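/- Let T be a tree and let O be a strongly confluent partial orientation of T such that every vertex has an outgoing arc in O. Then: (a) O is a full orientation of T: for every arc (u,v), exactly one of (u,v), (v,u) lies in O; (b) for every vertex v the forward orbit v, f_O(v), f_O²(v), … is injective; and (c) any two forward orbits merge: for all vertices v, w there exist m, n ≥ 0 with f_O^m(v) = f_O^n(w). (Thus O orients every arc of T toward a single end of T.) -/

import Mathlib

open SimpleGraph

variable {V : Type*}

/-- A strongly confluent partial orientation (s.c.p.o.) of a simple graph `Γ`: a set `O` of
arcs (ordered pairs of adjacent vertices) such that (i) `O` never contains both an arc and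
its reverse; (ii) at most one arc of `O` originates at each vertex; (iii) if some arc of
`O` originates at `v`, then every edge incident with `v` is oriented by `O`. -/
def IsSCPO (Γ : SimpleGraph V) (O : Set (V × V)) : Prop :=
  (∀ p ∈ O, Γ.Adj p.1 p.2) ∧
  (∀ u v : V, (u, v) ∈ O → (v, u) ∉ O) ∧
  (∀ v u u' : V, (v, u) ∈ O → (v, u') ∈ O → u = u') ∧
  (∀ v u : V, (v, u) ∈ O → ∀ w : V, Γ.Adj v w → ((v, w) ∈ O ∨ (w, v) ∈ O))

/-- The map associated with a confluent partial orientation: `fO O v` is the terminus of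
the arc of `O` originating at `v` if there is one, and `v` otherwise. -/
noncomputable def fO (O : Set (V × V)) (v : V) : V :=
  haveI := Classical.propDecidable (∃ w : V, (v, w) ∈ O)
  if h : ∃ w : V, (v, w) ∈ O then h.choose else v

/-- The walk along the orbit of `f` starting at `x`, of length `n`. -/
noncomputable def orbitWalk (T : SimpleGraph V) (f : V → V) (h : ∀ v, T.Adj v (f v)) (x : V) :
    (n : ℕ) → T.Walk x (f^[n] x)
  | 0 => Walk.nil
  | n+1 => (Walk.cons (h x) (orbitWalk T f h (f x) n)).copy rfl
      (by rw [← Function.iterate_succ_apply])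

theorem orbitWalk_support (T : SimpleGraph V) (f : V → V) (h : ∀ v, T.Adj v (f v)) (x : V) :
    ∀ n, (orbitWalk T f h x n).support = (List.range (n+1)).map (fun i => f^[i] x)
  | 0 => by simp [orbitWalk]
  | n+1 => by
    rw [orbitWalk, Walk.support_copy, Walk.support_cons,
      orbitWalk_support T f h (f x) n, List.range_succ_eq_map (n := n+1), List.map_cons,
      List.map_map, Function.iterate_zero, id_eq]
    refine congrArg₂ _ rfl (List.map_congr_left fun i _ => ?_)
    simp [Function.comp, Function.iterate_succ_apply]

theorem orbitWalk_edges (T : SimpleGraph V) (f : V → V) (h : ∀ v, T.Adj v (f v)) (x : V) :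
    ∀ n, (orbitWalk T f h x n).edges =
      (List.range n).map (fun i => s(f^[i] x, f^[i+1] x))
  | 0 => by simp [orbitWalk]
  | n+1 => by
    rw [orbitWalk, Walk.edges_copy, Walk.edges_cons,
      orbitWalk_edges T f h (f x) n, List.range_succ_eq_map (n := n), List.map_cons,
      List.map_map, Function.iterate_zero, id_eq, Function.iterate_one]
    refine congrArg₂ _ rfl (List.map_congr_left fun i _ => ?_)
    simp [Function.comp, Function.iterate_succ_apply]

/-- Theorem: a strongly confluent partial orientation `O` of a tree `T` in which every
vertex has an outgoing arc is a full orientation, every forward `f_O`-orbit is injective,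
and any two forward orbits merge (so `O` points towards a single end of `T`). -/
theorem scpo_without_sinks
    (T : SimpleGraph V) (hT : T.IsTree) (O : Set (V × V)) (hO : IsSCPO T O)
    (hfull : ∀ v : V, ∃ w : V, (v, w) ∈ O) :
    (∀ u v : V, T.Adj u v → ((u, v) ∈ O ↔ (v, u) ∉ O)) ∧
    (∀ v : V, Function.Injective (fun n : ℕ => (fO O)^[n] v)) ∧
    (∀ v w : V, ∃ m n : ℕ, (fO O)^[m] v = (fO O)^[n] w) := by
  set f := fO O with hf
  -- basic properties of f
  have hmem : ∀ v : V, (v, f v) ∈ O := by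
    intro v
    rw [hf, fO]
    haveI := Classical.propDecidable (∃ w : V, (v, w) ∈ O)
    rw [dif_pos (hfull v)]
    exact (hfull v).choose_spec
  have heq : ∀ v w : V, (v, w) ∈ O → f v = w := fun v w h =>
    hO.2.2.1 v (f v) w (hmem v) h
  have hadj : ∀ v : V, T.Adj v (f v) := fun v => hO.1 (v, f v) (hmem v)
  have hback : ∀ v : V, f (f v) ≠ v := by
    intro v hc
    have h2 := hmem (f v)
    rw [hc] at h2
    exact hO.2.1 v (f v) (hmem v) h2
  -- (a) full orientation
  have hfullor : ∀ u v : V, T.Adj u v → ((u, v) ∈ O ↔ (v, u) ∉ O) := by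
    intro u v huv
    constructor
    · exact hO.2.1 u v
    · intro hnv
      rcases hO.2.2.2 v (f v) (hmem v) u huv.symm with h | h
      · exact absurd h hnv
      · exact h
  -- no periodic points
  have hnoper : ∀ (x : V) (p : ℕ), 0 < p → f^[p] x ≠ x := by
    intro x p hp0 hpx
    -- take the minimal period
    have hex : ∃ p : ℕ, 0 < p ∧ f^[p] x = x := ⟨p, hp0, hpx⟩
    classical
    set q := Nat.find hex with hq
    obtain ⟨hq0, hqx⟩ := Nat.find_spec hex
    rw [← hq] at hq0 hqx
    have hmin : ∀ m, 0 < m → m < q → f^[m] x ≠ x := by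
      intro m hm0 hmq hmx
      exact Nat.find_min hex hmq ⟨hm0, hmx⟩
    -- injectivity of i ↦ f^[i] x on [0, q)
    have hinj : ∀ i j, i < q → j < q → f^[i] x = f^[j] x → i = j := by
      have key : ∀ i j, i ≤ j → i < q → j < q → f^[i] x = f^[j] x → i = j := by
        intro i j hij hiq hjq he
        rcases Nat.lt_or_ge i j with hlt | hge
        · exfalso
          have h1 : f^[q - j] (f^[j] x) = x := by
            rw [← Function.iterate_add_apply, Nat.sub_add_cancel hjq.le, hqx]
          have h2 : f^[q - j + i] x = x := by
            rw [Function.iterate_add_apply, he, h1]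
          have hpos : 0 < q - j + i := by omega
          have hlt' : q - j + i < q := by omega
          exact hmin _ hpos hlt' h2
        · omega
      intro i j hiq hjq he
      rcases Nat.le_total i j with h | h
      · exact key i j h hiq hjq he
      · exact (key j i h hjq hiq he.symm).symm
    -- q ≥ 3
    have hq1 : q ≠ 1 := by
      intro h1
      have : f x = x := by simpa [h1] using hqx
      exact T.irrefl (this ▸ hadj x)
    have hq2 : q ≠ 2 := by
      intro h2
      have h' := hqx
      rw [h2] at h'
      exact hback x (by simpa [Function.iterate_succ_apply'] using h')
    have hq3 : 3 ≤ q := by omega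
    -- the closed orbit walk is a cycle
    have hqe : f^[q-1] (f x) = x := by
      have h' : f^[q-1] (f x) = f^[q-1+1] x := (Function.iterate_succ_apply f (q-1) x).symm
      rw [h', show q - 1 + 1 = q by omega, hqx]
    let w : T.Walk (f x) x := (orbitWalk T f hadj (f x) (q-1)).copy rfl hqe
    have hiter : ∀ i, f^[i] (f x) = f^[i+1] x := by
      intro i; rw [← Function.iterate_succ_apply]
    have hsup : w.support = (List.range q).map (fun i => f^[i+1] x) := by
      simp only [w, Walk.support_copy, orbitWalk_support]
      rw [show q - 1 + 1 = q by omega]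
      exact List.map_congr_left fun i _ => hiter i
    have hedg : w.edges = (List.range (q-1)).map (fun i => s(f^[i+1] x, f^[i+2] x)) := by
      simp only [w, Walk.edges_copy, orbitWalk_edges]
      refine List.map_congr_left fun i _ => ?_
      rw [hiter i, hiter (i+1)]
    have hpath : w.IsPath := by
      rw [Walk.isPath_def, hsup]
      refine List.Nodup.map_on ?_ List.nodup_range
      intro i hi j hj he
      rw [List.mem_range] at hi hj
      -- i+1, j+1 ≤ q
      rcases Nat.lt_or_ge (i+1) q with hi' | hi'
      · rcases Nat.lt_or_ge (j+1) q with hj' | hj'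
        · exact Nat.succ_injective (hinj _ _ hi' hj' he)
        · have hjq : j + 1 = q := by omega
          rw [hjq, hqx] at he
          have := hinj (i+1) 0 hi' hq0 (he.trans (Function.iterate_zero_apply f x).symm)
          omega
      · have hiq : i + 1 = q := by omega
        rw [hiq, hqx] at he
        rcases Nat.lt_or_ge (j+1) q with hj' | hj'
        · have := hinj 0 (j+1) hq0 hj' ((Function.iterate_zero_apply f x).trans he)
          omega
        · omega
    have hnedge : ¬ s(x, f x) ∈ w.edges := by
      rw [hedg]
      intro hc
      rw [List.mem_map] at hc
      obtain ⟨i, hi, he⟩ := hc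
      rw [List.mem_range] at hi
      rw [Sym2.eq_iff] at he
      rcases he with ⟨h1, h2⟩ | ⟨h1, h2⟩
      · -- f^[i+1] x = x
        exact hmin (i+1) (by omega) (by omega) h1
      · -- f^[i+1] x = f x, f^[i+2] x = x
        rcases Nat.lt_or_ge (i+2) q with h | h
        · exact hmin (i+2) (by omega) h h2
        · have hi2 : i + 2 = q := by omega
          have h1' : f^[i+1] x = f^[1] x := by simpa using h1
          have := hinj (i+1) 1 (by omega) (by omega) h1'
          omega
    have hcyc : (Walk.cons (hadj x) w).IsCycle := by
      rw [Walk.cons_isCycle_iff]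
      exact ⟨hpath, hnedge⟩
    exact hT.IsAcyclic (Walk.cons (hadj x) w) hcyc
  -- (b) injectivity of orbits
  have hinjorb : ∀ v : V, Function.Injective (fun n : ℕ => f^[n] v) := by
    intro v
    have key : ∀ m n : ℕ, m < n → f^[m] v = f^[n] v → False := by
      intro m n hmn he
      have h' : f^[n - m] (f^[m] v) = f^[m] v := by
        rw [← Function.iterate_add_apply, Nat.sub_add_cancel hmn.le, he]
      exact hnoper (f^[m] v) (n - m) (by omega) h'
    intro m n he
    simp only at he
    rcases lt_trichotomy m n with h | h | h
    · exact absurd he (fun he => key m n h he)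
    · exact h
    · exact absurd he.symm (fun he => key n m h he)
  refine ⟨hfullor, hinjorb, ?_⟩
  -- (c) merging of orbits
  have claim : ∀ (a b : V) (p : T.Walk a b), ∃ m n : ℕ, f^[m] a = f^[n] b := by
    intro a b p
    induction p with
    | nil => exact ⟨0, 0, rfl⟩
    | @cons a b c h p ih =>
      obtain ⟨m, n, hmn⟩ := ih
      rcases hO.2.2.2 a (f a) (hmem a) b h with harc | harc
      · -- f a = b
        have hfa : f a = b := heq a b harc
        exact ⟨m + 1, n, by rw [Function.iterate_add_apply, Function.iterate_one, hfa, hmn]⟩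
      · -- f b = a
        have hfb : f b = a := heq b a harc
        refine ⟨m, n + 1, ?_⟩
        calc f^[m] a = f^[m] (f b) := by rw [hfb]
          _ = f^[m + 1] b := (Function.iterate_succ_apply f m b).symm
          _ = f (f^[m] b) := Function.iterate_succ_apply' f m b
          _ = f (f^[n] c) := by rw [hmn]
          _ = f^[n+1] c := (Function.iterate_succ_apply' f n c).symm
  intro v w
  exact (hT.isConnected v w).elim fun pwalk => claim v w pwalk
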